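/- arXiv:2112.06770 — 3 statements merged into one kernel-verified Lean document; each statement's English description precedes it below -/
import Mathlib

section
/- For every integer q ≥ 3, the element G of PSL(2,ℝ) has order exactly q: G^q = 1, and G^k ≠ 1 for every integer k with 1 ≤ k < q. -/
open Matrix

/-- `λ_q = 2 cos (π / q)`. -/
noncomputable def lam (q : ℕ) : ℝ := 2 * Real.cos (Real.pi / q)

/-- The matrix `K = [[0,-1],[1,0]]` as an element of `SL(2,ℝ)`. -/
noncomputable def Kmat : Matrix.SpecialLinearGroup (Fin 2) ℝ :=
  ⟨!![0, -1; 1, 0], by simp [Matrix.det_fin_two_of]⟩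

/-- The matrix `G = [[0,-1],[1,λ_q]]` as an element of `SL(2,ℝ)`. -/
noncomputable def Gmat (q : ℕ) : Matrix.SpecialLinearGroup (Fin 2) ℝ :=
  ⟨!![0, -1; 1, lam q], by simp [Matrix.det_fin_two_of]⟩

/-- `PSL(2,ℝ)`, the quotient of `SL(2,ℝ)` by its center `{±I}`. -/
abbrev PSL2R : Type :=
  Matrix.SpecialLinearGroup (Fin 2) ℝ ⧸ Subgroup.center (Matrix.SpecialLinearGroup (Fin 2) ℝ)

/-- The class of `K` in `PSL(2,ℝ)`. -/
noncomputable def Kpsl : PSL2R := QuotientGroup.mk Kmat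

/-- The class of `G` in `PSL(2,ℝ)`. -/
noncomputable def Gpsl (q : ℕ) : PSL2R := QuotientGroup.mk (Gmat q)

/-- Chebyshev-type formula for the powers of `Gmat q`. -/
lemma Gpow (q : ℕ) (hs : Real.sin (Real.pi / q) ≠ 0) (k : ℕ) :
    ((Gmat q ^ k : Matrix.SpecialLinearGroup (Fin 2) ℝ) : Matrix (Fin 2) (Fin 2) ℝ) =
      !![-Real.sin ((k - 1 : ℝ) * (Real.pi / q)) / Real.sin (Real.pi / q),
         -Real.sin (k * (Real.pi / q)) / Real.sin (Real.pi / q);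
         Real.sin (k * (Real.pi / q)) / Real.sin (Real.pi / q),
         Real.sin ((k + 1 : ℝ) * (Real.pi / q)) / Real.sin (Real.pi / q)] := by
  have key : ∀ x : ℝ, Real.sin (x + Real.pi / q)
      = 2 * Real.cos (Real.pi / q) * Real.sin x - Real.sin (x - Real.pi / q) := by
    intro x; rw [Real.sin_add, Real.sin_sub]; ring
  induction k with
  | zero =>
    ext i j; fin_cases i <;> fin_cases j <;>
      simp [Real.sin_neg, div_self hs]
  | succ n ih =>
    rw [pow_succ, Matrix.SpecialLinearGroup.coe_mul, ih]
    simp only [Gmat]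
    ext i j
    fin_cases i <;> fin_cases j <;>
        simp [Matrix.mul_apply, Fin.sum_univ_two, lam] <;> push_cast
    · rw [show ((n : ℝ) + 1) * (Real.pi / q) = n * (Real.pi / q) + Real.pi / q from by ring,
        show ((n : ℝ) - 1) * (Real.pi / q) = n * (Real.pi / q) - Real.pi / q from by ring, key]
      field_simp
      ring
    · rw [show ((n : ℝ) + 1 + 1) * (Real.pi / q) = ((n : ℝ) + 1) * (Real.pi / q) + Real.pi / q
          from by ring,
        show (n : ℝ) * (Real.pi / q) = ((n : ℝ) + 1) * (Real.pi / q) - Real.pi / q from by ring,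
        key]
      field_simp
      ring

/-- For every integer `q ≥ 3`, the element `G` of `PSL(2,ℝ)` has order exactly `q`:
`G^q = 1` and `G^k ≠ 1` for every integer `k` with `1 ≤ k < q`. -/
theorem hecke_G_order (q : ℕ) (hq : 3 ≤ q) :
    Gpsl q ^ q = 1 ∧ ∀ k : ℕ, 1 ≤ k → k < q → Gpsl q ^ k ≠ 1 := by
  have hq0 : (q : ℝ) ≠ 0 := by positivity
  have hθpos : 0 < Real.pi / q := by positivity
  have hθlt : Real.pi / q < Real.pi := by
    calc Real.pi / q ≤ Real.pi / 3 := by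
          apply div_le_div_of_nonneg_left Real.pi_pos.le (by norm_num)
          exact_mod_cast hq
      _ < Real.pi := by linarith [Real.pi_pos]
  have hs : Real.sin (Real.pi / q) ≠ 0 :=
    ne_of_gt (Real.sin_pos_of_pos_of_lt_pi hθpos hθlt)
  have hqθ : (q : ℝ) * (Real.pi / q) = Real.pi := by field_simp
  constructor
  · have hGq : (Gmat q) ^ q = -1 := by
      apply Subtype.ext
      rw [Gpow q hs q]
      ext i j
      fin_cases i <;> fin_cases j <;>
        simp [hqθ, show ((q:ℝ) - 1) * (Real.pi / q) = Real.pi - Real.pi / q from by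
            field_simp,
          show ((q:ℝ) + 1) * (Real.pi / q) = Real.pi + Real.pi / q from by field_simp,
          Real.sin_pi_sub, Real.sin_add, Real.sin_pi, Real.cos_pi, div_self hs, neg_div]
    calc Gpsl q ^ q = QuotientGroup.mk ((Gmat q) ^ q) := rfl
      _ = 1 := by
          rw [hGq, QuotientGroup.eq_one_iff]
          rw [Matrix.SpecialLinearGroup.mem_center_iff]
          exact ⟨-1, by norm_num, by ext i j; fin_cases i <;> fin_cases j <;> simp⟩
  · intro k hk1 hkq h
    have hmem : (Gmat q) ^ k ∈ Subgroup.center (Matrix.SpecialLinearGroup (Fin 2) ℝ) := by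
      rw [← QuotientGroup.eq_one_iff]
      exact h
    obtain ⟨r, -, hr⟩ := Matrix.SpecialLinearGroup.mem_center_iff.mp hmem
    have h10 : ((Gmat q ^ k : Matrix.SpecialLinearGroup (Fin 2) ℝ) :
        Matrix (Fin 2) (Fin 2) ℝ) 1 0 = 0 := by
      rw [← hr]
      simp [Matrix.scalar_apply]
    rw [Gpow q hs k] at h10
    have h10' : Real.sin (k * (Real.pi / q)) / Real.sin (Real.pi / q) = 0 := by
      simpa using h10
    have hsin : Real.sin (k * (Real.pi / q)) > 0 := by
      apply Real.sin_pos_of_pos_of_lt_pi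
      · have : (1 : ℝ) ≤ k := by exact_mod_cast hk1
        nlinarith
      · have hk : (k : ℝ) < q := by exact_mod_cast hkq
        calc (k : ℝ) * (Real.pi / q) < q * (Real.pi / q) := by
              apply mul_lt_mul_of_pos_right hk hθpos
          _ = Real.pi := hqθ
    rw [div_eq_zero_iff] at h10'
    rcases h10' with h10 | h10
    · linarith
    · exact hs h10
end

section
/- For every integer q ≥ 3, the group homomorphism from the free product (ℤ/2ℤ) ∗ (ℤ/qℤ) to PSL(2,ℝ) that sends the canonical generator of ℤ/2ℤ to K and the canonical generator of ℤ/qℤ to G is injective; consequently the Hecke group H_q is isomorphic to the free product (ℤ/2ℤ) ∗ (ℤ/qℤ), i.e., H_q has the presentation ⟨K, G : K² = G^q = e⟩. -/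
open Matrix Pointwise

/-- The Hecke group `H_q`, the subgroup of `PSL(2,ℝ)` generated by `K` and `G`. -/
noncomputable def HeckeGroup (q : ℕ) : Subgroup PSL2R := Subgroup.closure {Kpsl, Gpsl q}

/-! ### Auxiliary: the action of `PSL(2,ℝ)` on the real projective line -/

abbrev SL2R := Matrix.SpecialLinearGroup (Fin 2) ℝ
abbrev Pt : Type := Projectivization ℝ (Fin 2 → ℝ)

theorem mulVec_ne_zero (g : SL2R) {v : Fin 2 → ℝ} (hv : v ≠ 0) : g.1.mulVec v ≠ 0 := by
  have := (Matrix.SpecialLinearGroup.toLin' g).map_ne_zero_iff.mpr hv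
  rwa [Matrix.SpecialLinearGroup.toLin'_apply, Matrix.toLin'_apply] at this

/-- Action of `SL(2,ℝ)` on the projective line. -/
noncomputable def slSMul (g : SL2R) (p : Pt) : Pt :=
  Projectivization.map (Matrix.SpecialLinearGroup.toLin' g).toLinearMap
    (Matrix.SpecialLinearGroup.toLin' g).injective p

theorem slSMul_mk (g : SL2R) (v : Fin 2 → ℝ) (hv : v ≠ 0) :
    slSMul g (Projectivization.mk ℝ v hv) = Projectivization.mk ℝ (g.1.mulVec v)
      (mulVec_ne_zero g hv) := by
  rw [slSMul, Projectivization.map_mk]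
  congr 1

theorem slSMul_one (p : Pt) : slSMul 1 p = p := by
  induction p using Projectivization.ind with
  | h v hv => rw [slSMul_mk]; congr 1; simp

theorem slSMul_mul (g h : SL2R) (p : Pt) : slSMul (g * h) p = slSMul g (slSMul h p) := by
  induction p using Projectivization.ind with
  | h v hv =>
    rw [slSMul_mk, slSMul_mk, slSMul_mk]
    congr 1
    simp only [Matrix.SpecialLinearGroup.coe_mul, Matrix.mulVec_mulVec]

theorem slSMul_center {g : SL2R} (hg : g ∈ Subgroup.center SL2R) (p : Pt) : slSMul g p = p := by
  obtain ⟨r, hr2, hrg⟩ := Matrix.SpecialLinearGroup.mem_center_iff.mp hg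
  have hr0 : r ≠ 0 := by
    intro h; rw [h] at hr2; simp at hr2
  induction p using Projectivization.ind with
  | h v hv =>
    rw [slSMul_mk]
    rw [Projectivization.mk_eq_mk_iff']
    refine ⟨r, ?_⟩
    rw [← hrg]
    ext i
    rw [Matrix.scalar_apply]
    fin_cases i <;>
      simp [Matrix.mulVec, Matrix.diagonal, dotProduct, Fin.sum_univ_two]

noncomputable def psmul (g : PSL2R) (p : Pt) : Pt :=
  Quotient.liftOn' g (fun g => slSMul g p) (by
    intro a b hab
    rw [QuotientGroup.leftRel_apply] at hab
    show slSMul a p = slSMul b p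
    have hb : b = a * (a⁻¹ * b) := by group
    rw [hb, slSMul_mul, slSMul_center hab])

noncomputable instance : MulAction PSL2R Pt where
  smul := psmul
  one_smul p := slSMul_one p
  mul_smul g h p := by
    induction g using QuotientGroup.induction_on
    induction h using QuotientGroup.induction_on
    next z1 z2 =>
    show psmul (QuotientGroup.mk (z1 * z2)) p = psmul (QuotientGroup.mk z1) (psmul (QuotientGroup.mk z2) p)
    exact slSMul_mul _ _ p

theorem psl_smul_mk (g : SL2R) (v : Fin 2 → ℝ) (hv : v ≠ 0) :
    (QuotientGroup.mk g : PSL2R) • (Projectivization.mk ℝ v hv)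
      = Projectivization.mk ℝ (g.1.mulVec v) (mulVec_ne_zero g hv) :=
  slSMul_mk g v hv

/-! ### Sign sets on the projective line -/

/-- The set of points of the projective line with positive slope. -/
noncomputable def posSet : Set Pt := {p | 0 < p.rep 0 * p.rep 1}

/-- The set of points of the projective line with negative slope. -/
noncomputable def negSet : Set Pt := {p | p.rep 0 * p.rep 1 < 0}

theorem rep_sign (v : Fin 2 → ℝ) (hv : v ≠ 0) :
    ∃ a : ℝ, a ≠ 0 ∧
      (Projectivization.mk ℝ v hv).rep 0 * (Projectivization.mk ℝ v hv).rep 1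
        = a ^ 2 * (v 0 * v 1) := by
  obtain ⟨a, ha⟩ := Projectivization.exists_smul_eq_mk_rep ℝ v hv
  refine ⟨(a : ℝ), a.ne_zero, ?_⟩
  rw [← ha]
  simp [Units.smul_def]
  ring

theorem mk_mem_posSet_iff (v : Fin 2 → ℝ) (hv : v ≠ 0) :
    Projectivization.mk ℝ v hv ∈ posSet ↔ 0 < v 0 * v 1 := by
  obtain ⟨a, ha, h⟩ := rep_sign v hv
  have ha2 : 0 < a ^ 2 := by positivity
  constructor
  · intro hp
    have : (0:ℝ) < a ^ 2 * (v 0 * v 1) := by rwa [posSet, Set.mem_setOf_eq, h] at hp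
    nlinarith
  · intro hp
    simp only [posSet, Set.mem_setOf_eq, h]
    exact mul_pos ha2 hp

theorem mk_mem_negSet_iff (v : Fin 2 → ℝ) (hv : v ≠ 0) :
    Projectivization.mk ℝ v hv ∈ negSet ↔ v 0 * v 1 < 0 := by
  obtain ⟨a, ha, h⟩ := rep_sign v hv
  have ha2 : 0 < a ^ 2 := by positivity
  constructor
  · intro hp
    have : a ^ 2 * (v 0 * v 1) < 0 := by rwa [negSet, Set.mem_setOf_eq, h] at hp
    nlinarith
  · intro hp
    simp only [negSet, Set.mem_setOf_eq, h]
    exact mul_neg_of_pos_of_neg ha2 hp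

/-! ### The entries of `G^k` -/

noncomputable def sfn (q : ℕ) (j : ℕ) : ℝ :=
  Real.sin (j * (Real.pi / q)) / Real.sin (Real.pi / q)

section
variable {q : ℕ} (hq : 3 ≤ q)
include hq

theorem t_pos : 0 < Real.pi / q := by
  apply div_pos Real.pi_pos; exact_mod_cast Nat.lt_of_lt_of_le (by norm_num) hq

theorem sin_t_pos : 0 < Real.sin (Real.pi / q) := by
  apply Real.sin_pos_of_pos_of_lt_pi (t_pos hq)
  have hq3 : (3:ℝ) ≤ q := by exact_mod_cast hq
  calc Real.pi / q ≤ Real.pi / 3 := by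
        apply div_le_div_of_nonneg_left (le_of_lt Real.pi_pos) (by norm_num) hq3
    _ < Real.pi := by linarith [Real.pi_pos]

theorem sfn_zero : sfn q 0 = 0 := by simp [sfn]

theorem sfn_one : sfn q 1 = 1 := by
  rw [sfn]; simp; exact ne_of_gt (sin_t_pos hq)

theorem sfn_two : sfn q 2 = lam q := by
  rw [sfn, lam]
  push_cast
  rw [show (2:ℝ) * (Real.pi / q) = Real.pi/q + Real.pi/q by ring, Real.sin_add]
  field_simp [ne_of_gt (sin_t_pos hq)]
  ring

theorem sfn_rec (k : ℕ) : sfn q (k + 2) = lam q * sfn q (k + 1) - sfn q k := by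
  rw [sfn, sfn, sfn, lam]
  have h1 : ((k:ℝ) + 2) * (Real.pi / q) = ((k:ℝ)+1) * (Real.pi/q) + Real.pi/q := by ring
  have h2 : (k:ℝ) * (Real.pi / q) = ((k:ℝ)+1) * (Real.pi/q) - Real.pi/q := by ring
  push_cast
  rw [h1, h2, Real.sin_add, Real.sin_sub]
  field_simp
  ring

theorem sfn_nonneg {j : ℕ} (hj : j ≤ q) : 0 ≤ sfn q j := by
  apply div_nonneg _ (le_of_lt (sin_t_pos hq))
  apply Real.sin_nonneg_of_nonneg_of_le_pi
  · positivity
  · have hq0 : (0:ℝ) < q := by exact_mod_cast Nat.lt_of_lt_of_le (by norm_num) hq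
    rw [div_eq_mul_inv, ← mul_assoc]
    rw [show (j:ℝ) * Real.pi * (q:ℝ)⁻¹ = Real.pi * ((j:ℝ) / q) by ring]
    nlinarith [Real.pi_pos, (div_le_one hq0).mpr (by exact_mod_cast hj : (j:ℝ) ≤ q)]

theorem sfn_pos {j : ℕ} (hj1 : 1 ≤ j) (hj2 : j < q) : 0 < sfn q j := by
  apply div_pos _ (sin_t_pos hq)
  apply Real.sin_pos_of_pos_of_lt_pi
  · have : (0:ℝ) < j := by exact_mod_cast hj1
    have := t_pos hq
    positivity
  · have hq0 : (0:ℝ) < q := by exact_mod_cast Nat.lt_of_lt_of_le (by norm_num) hq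
    rw [div_eq_mul_inv, ← mul_assoc,
      show (j:ℝ) * Real.pi * (q:ℝ)⁻¹ = Real.pi * ((j:ℝ) / q) by ring]
    nlinarith [Real.pi_pos, (div_lt_one hq0).mpr (by exact_mod_cast hj2 : (j:ℝ) < q)]

theorem Gmat_pow (k : ℕ) :
    ((Gmat q).1) ^ (k + 1) =
      !![-sfn q k, -sfn q (k+1); sfn q (k+1), sfn q (k+2)] := by
  have hG : (Gmat q).1 = !![0, -1; 1, lam q] := rfl
  induction k with
  | zero =>
    rw [pow_one, hG, sfn_zero hq, sfn_one hq, sfn_two hq]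
    norm_num
  | succ k ih =>
    rw [pow_succ, ih, hG, Matrix.mul_fin_two]
    have e1 := sfn_rec hq k
    have e2 := sfn_rec hq (k + 1)
    have h3 : k + 1 + 1 = k + 2 := rfl
    have h4 : k + 1 + 2 = (k + 1) + 2 := rfl
    ext i j
    fin_cases i <;> fin_cases j <;>
      simp only [Matrix.cons_val', Matrix.cons_val_zero, Matrix.cons_val_one, Matrix.head_cons,
        Matrix.head_fin_const, Matrix.cons_val_fin_one, Matrix.empty_val',
        Matrix.of_apply, h3, h4, e1, e2] <;> ring

/-! ### The two ping-pong inclusions -/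

theorem K_maps : Kpsl • negSet ⊆ posSet := by
  rintro p ⟨x, hx, rfl⟩
  induction x using Projectivization.ind with
  | h v hv =>
    rw [mk_mem_negSet_iff] at hx
    show (QuotientGroup.mk Kmat : PSL2R) • Projectivization.mk ℝ v hv ∈ posSet
    rw [psl_smul_mk, mk_mem_posSet_iff]
    have h0 : Kmat.1.mulVec v 0 = -v 1 := by
      simp [Kmat, Matrix.mulVec, dotProduct, Fin.sum_univ_two]
    have h1 : Kmat.1.mulVec v 1 = v 0 := by
      simp [Kmat, Matrix.mulVec, dotProduct, Fin.sum_univ_two]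
    rw [h0, h1]
    nlinarith

theorem G_maps {m : ℕ} (hm1 : 1 ≤ m) (hm2 : m < q) : (Gpsl q) ^ m • posSet ⊆ negSet := by
  obtain ⟨k, rfl⟩ := Nat.exists_eq_add_of_le hm1
  rintro p ⟨x, hx, rfl⟩
  induction x using Projectivization.ind with
  | h v hv =>
    rw [mk_mem_posSet_iff] at hx
    have hGp : (Gpsl q) ^ (1 + k) = (QuotientGroup.mk ((Gmat q) ^ (1 + k)) : PSL2R) := by
      rw [Gpsl]; rfl
    show (QuotientGroup.mk (Gmat q ^ (1+k)) : PSL2R) • Projectivization.mk ℝ v hv ∈ negSet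
    rw [psl_smul_mk, mk_mem_negSet_iff]
    have hco : ((Gmat q) ^ (1 + k)).1 = ((Gmat q).1) ^ (k + 1) := by
      rw [Nat.add_comm 1 k]; rfl
    have hM := Gmat_pow hq k
    -- entry values
    have h0 : ((Gmat q) ^ (1 + k)).1.mulVec v 0 = -sfn q k * v 0 + -sfn q (k+1) * v 1 := by
      rw [hco, hM]; simp [Matrix.mulVec, dotProduct, Fin.sum_univ_two]
    have h1 : ((Gmat q) ^ (1 + k)).1.mulVec v 1 = sfn q (k+1) * v 0 + sfn q (k+2) * v 1 := by
      rw [hco, hM]; simp [Matrix.mulVec, dotProduct, Fin.sum_univ_two]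
    rw [h0, h1]
    have hs0 : 0 ≤ sfn q k := sfn_nonneg hq (by omega)
    have hs1 : 0 < sfn q (k+1) := sfn_pos hq (by omega) (by omega)
    have hs2 : 0 ≤ sfn q (k+2) := sfn_nonneg hq (by omega)
    rcases mul_pos_iff.mp hx with ⟨ha, hb⟩ | ⟨ha, hb⟩
    · apply mul_neg_of_neg_of_pos <;> nlinarith
    · apply mul_neg_of_pos_of_neg <;> nlinarith

end

/-! ### Transfer between `Coprod` and `CoprodI` -/

/-- The two-factor family for the indexed free product. -/
def Hfam (q : ℕ) : Bool → Type := fun b => cond b (Multiplicative (ZMod q)) (Multiplicative (ZMod 2))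

instance (q : ℕ) (b : Bool) : Group (Hfam q b) := by
  cases b
  · exact inferInstanceAs (Group (Multiplicative (ZMod 2)))
  · exact inferInstanceAs (Group (Multiplicative (ZMod q)))

/-- From the binary coproduct to the indexed one. -/
def toCoprodI (q : ℕ) :
    Monoid.Coprod (Multiplicative (ZMod 2)) (Multiplicative (ZMod q)) →* Monoid.CoprodI (Hfam q) :=
  Monoid.Coprod.lift
    (Monoid.CoprodI.of (M := Hfam q) (i := false))
    (Monoid.CoprodI.of (M := Hfam q) (i := true))

/-- From the indexed coproduct to the binary one. -/
def fromCoprodI (q : ℕ) :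
    Monoid.CoprodI (Hfam q) →* Monoid.Coprod (Multiplicative (ZMod 2)) (Multiplicative (ZMod q)) :=
  Monoid.CoprodI.lift (fun b => Bool.rec
    (motive := fun b => Hfam q b →* Monoid.Coprod (Multiplicative (ZMod 2)) (Multiplicative (ZMod q)))
    Monoid.Coprod.inl Monoid.Coprod.inr b)

theorem from_to (q : ℕ) : (fromCoprodI q).comp (toCoprodI q) = MonoidHom.id _ := by
  apply Monoid.Coprod.hom_ext
  · refine MonoidHom.ext fun x => ?_
    show fromCoprodI q (toCoprodI q (Monoid.Coprod.inl x)) = Monoid.Coprod.inl x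
    rw [show toCoprodI q (Monoid.Coprod.inl x) = Monoid.CoprodI.of (M := Hfam q) (i := false) x from
      Monoid.Coprod.lift_apply_inl _ _ x, fromCoprodI]
    exact Monoid.CoprodI.lift_of (ι := Bool) (M := Hfam q) (fun b => Bool.rec
      (motive := fun b => Hfam q b →* Monoid.Coprod (Multiplicative (ZMod 2)) (Multiplicative (ZMod q)))
      Monoid.Coprod.inl Monoid.Coprod.inr b) (i := false) x
  · refine MonoidHom.ext fun x => ?_
    show fromCoprodI q (toCoprodI q (Monoid.Coprod.inr x)) = Monoid.Coprod.inr x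
    rw [show toCoprodI q (Monoid.Coprod.inr x) = Monoid.CoprodI.of (M := Hfam q) (i := true) x from
      Monoid.Coprod.lift_apply_inr _ _ x, fromCoprodI]
    exact Monoid.CoprodI.lift_of (ι := Bool) (M := Hfam q) (fun b => Bool.rec
      (motive := fun b => Hfam q b →* Monoid.Coprod (Multiplicative (ZMod 2)) (Multiplicative (ZMod q)))
      Monoid.Coprod.inl Monoid.Coprod.inr b) (i := true) x

theorem toCoprodI_injective (q : ℕ) : Function.Injective (toCoprodI q) := by
  have h := from_to q
  intro a b hab
  have := congrArg (fromCoprodI q) hab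
  rwa [← MonoidHom.comp_apply, ← MonoidHom.comp_apply, h, MonoidHom.id_apply,
    MonoidHom.id_apply] at this

/-- In `Multiplicative (ZMod n)` (`n ≠ 0`), every element is a power of `ofAdd 1`. -/
theorem multiplicative_zmod_pow {n : ℕ} [NeZero n] (h : Multiplicative (ZMod n)) :
    h = (Multiplicative.ofAdd (1 : ZMod n)) ^ (h.toAdd).val := by
  have h0 : ((h.toAdd).val : ZMod n) = h.toAdd := ZMod.natCast_rightInverse h.toAdd
  have h1 : ∀ m : ℕ, (Multiplicative.ofAdd (1 : ZMod n)) ^ m = Multiplicative.ofAdd ((m : ZMod n)) := by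
    intro m
    induction m with
    | zero => simp
    | succ m ih => rw [pow_succ, ih, ← ofAdd_add]; push_cast; rfl
  rw [h1, h0, ofAdd_toAdd]

/-! ### Main theorem -/

/-- For every integer `q ≥ 3`, the group homomorphism from the free product
`(ℤ/2ℤ) ∗ (ℤ/qℤ)` to `PSL(2,ℝ)` sending the canonical generator of `ℤ/2ℤ` to `K` and the
canonical generator of `ℤ/qℤ` to `G` is injective; consequently the Hecke group `H_q` is
isomorphic to `(ℤ/2ℤ) ∗ (ℤ/qℤ)`, i.e. `H_q` has the presentation `⟨K, G : K² = G^q = e⟩`. -/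
theorem hecke_free_product (q : ℕ) (hq : 3 ≤ q)
    (φ : Monoid.Coprod (Multiplicative (ZMod 2)) (Multiplicative (ZMod q)) →* PSL2R)
    (hK : φ (Monoid.Coprod.inl (Multiplicative.ofAdd (1 : ZMod 2))) = Kpsl)
    (hG : φ (Monoid.Coprod.inr (Multiplicative.ofAdd (1 : ZMod q))) = Gpsl q) :
    Function.Injective φ ∧ φ.range = HeckeGroup q := by
  haveI : NeZero q := ⟨by omega⟩
  set f : ∀ b, Hfam q b →* PSL2R := fun b => Bool.rec
    (motive := fun b => Hfam q b →* PSL2R)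
    (φ.comp Monoid.Coprod.inl) (φ.comp Monoid.Coprod.inr) b with hf
  have hfactor : φ = (Monoid.CoprodI.lift f).comp (toCoprodI q) := by
    apply Monoid.Coprod.hom_ext
    · refine MonoidHom.ext fun x => ?_
      show φ (Monoid.Coprod.inl x)
        = (Monoid.CoprodI.lift f) (toCoprodI q (Monoid.Coprod.inl x))
      rw [show toCoprodI q (Monoid.Coprod.inl x) = Monoid.CoprodI.of (M := Hfam q) (i := false) x from
        Monoid.Coprod.lift_apply_inl _ _ x]
      exact (Monoid.CoprodI.lift_of (ι := Bool) (M := Hfam q) f (i := false) x).symm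
    · refine MonoidHom.ext fun x => ?_
      show φ (Monoid.Coprod.inr x)
        = (Monoid.CoprodI.lift f) (toCoprodI q (Monoid.Coprod.inr x))
      rw [show toCoprodI q (Monoid.Coprod.inr x) = Monoid.CoprodI.of (M := Hfam q) (i := true) x from
        Monoid.Coprod.lift_apply_inr _ _ x]
      exact (Monoid.CoprodI.lift_of (ι := Bool) (M := Hfam q) f (i := true) x).symm
  -- the ping-pong sets
  set X : Bool → Set Pt := fun b => cond b negSet posSet with hX
  have hcard : 3 ≤ Cardinal.mk Bool ∨ ∃ b, 3 ≤ Cardinal.mk (Hfam q b) := by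
    right
    refine ⟨true, ?_⟩
    have h1 : Cardinal.mk (Hfam q true) = Cardinal.mk (ZMod q) :=
      Cardinal.mk_congr (Multiplicative.ofAdd (α := ZMod q)).symm
    rw [h1, Cardinal.mk_fintype, ZMod.card]
    exact_mod_cast hq
  have hv1 : (![1, 1] : Fin 2 → ℝ) ≠ 0 := by
    intro h; simpa using congr_fun h 0
  have hv2 : (![1, -1] : Fin 2 → ℝ) ≠ 0 := by
    intro h; simpa using congr_fun h 0
  have hne : ∀ b, (X b).Nonempty := by
    intro b
    cases b
    · refine ⟨Projectivization.mk ℝ ![1, 1] hv1, ?_⟩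
      show Projectivization.mk ℝ ![1, 1] hv1 ∈ posSet
      rw [mk_mem_posSet_iff]
      norm_num
    · refine ⟨Projectivization.mk ℝ ![1, -1] hv2, ?_⟩
      show Projectivization.mk ℝ ![1, -1] hv2 ∈ negSet
      rw [mk_mem_negSet_iff]
      norm_num
  have hdisj : Pairwise (Function.onFun Disjoint X) := by
    intro i j hij
    have hd : Disjoint posSet negSet := by
      rw [Set.disjoint_left]
      intro p hp hn
      simp only [posSet, negSet, Set.mem_setOf_eq] at hp hn
      linarith
    cases i <;> cases j
    · exact absurd rfl hij
    · show Disjoint posSet negSet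
      exact hd
    · show Disjoint negSet posSet
      exact hd.symm
    · exact absurd rfl hij
  have hpp : Pairwise fun i j => ∀ h : Hfam q i, h ≠ 1 → f i h • X j ⊆ X i := by
    intro i j hij
    cases i <;> cases j
    · exact (hij rfl).elim
    · -- K case
      intro h hne1
      have hh : h = Multiplicative.ofAdd (1 : ZMod 2) := by
        revert hne1
        revert h
        show ∀ h : Multiplicative (ZMod 2), h ≠ 1 → h = Multiplicative.ofAdd (1 : ZMod 2)
        decide
      have hfh : f false h = Kpsl := by
        show φ (Monoid.Coprod.inl h) = Kpsl
        rw [hh, hK]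
      rw [hfh]
      show Kpsl • negSet ⊆ posSet
      exact K_maps hq
    · -- G case
      intro h hne1
      have hval1 : 1 ≤ (Multiplicative.toAdd h).val := by
        rw [Nat.one_le_iff_ne_zero, Ne]; refine mt (ZMod.val_eq_zero (n := q) _).mp ?_
        intro hz
        apply hne1
        rw [← ofAdd_toAdd h, hz]
        rfl
      have hval2 : (Multiplicative.toAdd h).val < q := ZMod.val_lt _
      have hfh : f true h = (Gpsl q) ^ (Multiplicative.toAdd h).val := by
        show φ (Monoid.Coprod.inr h) = _
        conv_lhs => rw [multiplicative_zmod_pow h]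
        rw [map_pow, map_pow, hG]
        rfl
      rw [hfh]
      show (Gpsl q) ^ (Multiplicative.toAdd h).val • posSet ⊆ negSet
      exact G_maps hq hval1 hval2
    · exact (hij rfl).elim
  have hinj : Function.Injective (Monoid.CoprodI.lift f) :=
    Monoid.CoprodI.lift_injective_of_ping_pong f hcard X hne hdisj hpp
  constructor
  · rw [hfactor, MonoidHom.coe_comp]
    exact hinj.comp (toCoprodI_injective q)
  · have hgen : Subgroup.closure
        ({Monoid.Coprod.inl (Multiplicative.ofAdd (1 : ZMod 2)),
          Monoid.Coprod.inr (Multiplicative.ofAdd (1 : ZMod q))} :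
          Set (Monoid.Coprod (Multiplicative (ZMod 2)) (Multiplicative (ZMod q)))) = ⊤ := by
      rw [eq_top_iff]
      intro x _
      refine Monoid.Coprod.induction_on x ?_ ?_ ?_
      · intro m
        rw [multiplicative_zmod_pow m, map_pow]
        exact pow_mem (Subgroup.subset_closure (Set.mem_insert _ _)) _
      · intro n
        rw [multiplicative_zmod_pow n, map_pow]
        exact pow_mem (Subgroup.subset_closure
          (Set.mem_insert_of_mem _ (Set.mem_singleton _))) _
      · intro a b ha hb
        exact mul_mem ha hb
    rw [MonoidHom.range_eq_map, ← hgen, MonoidHom.map_closure, HeckeGroup]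
    congr 1
    rw [Set.image_insert_eq, Set.image_singleton, hK, hG]
end

section
/- Permutation form of the classification of finite-index subgroups of the Hecke group (Theorem on bipartite q-boid graphs): for every integer q ≥ 3 and every positive integer n, there is a bijection between (i) the set of conjugacy classes of index-n subgroups of the free product (ℤ/2ℤ) ∗ (ℤ/qℤ) (isomorphic to the Hecke group H_q), and (ii) the set of orbits, under simultaneous conjugation by Sym(Fin n), of pairs (σ, τ) of permutations of Fin n such that σ² = 1, τ^q = 1, and the subgroup of Sym(Fin n) generated by σ and τ acts transitively on Fin n. -/
/-- Two subgroups (of index `n`) are related iff they are conjugate. -/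
def conjRel (Γ : Type*) [Group Γ] (n : ℕ) :
    {H : Subgroup Γ // H.index = n} → {H : Subgroup Γ // H.index = n} → Prop :=
  fun H₁ H₂ => ∃ g : Γ, H₂.1 = Subgroup.map (MulAut.conj g).toMonoidHom H₁.1

/-- Pairs `(σ, τ)` of permutations of `Fin n` with `σ² = 1`, `τ^q = 1`, and such that the
subgroup generated by `σ` and `τ` acts transitively on `Fin n`.  These encode labelled
bipartite `q`-boid graphs with `n` edges. -/
def BoidPair (q n : ℕ) : Type :=
  {p : Equiv.Perm (Fin n) × Equiv.Perm (Fin n) //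
    p.1 ^ 2 = 1 ∧ p.2 ^ q = 1 ∧
    ∀ x y : Fin n, ∃ g ∈ Subgroup.closure {p.1, p.2}, g x = y}

/-- Two pairs are related iff they are simultaneously conjugate in `Sym(Fin n)`. -/
def boidRel (q n : ℕ) : BoidPair q n → BoidPair q n → Prop :=
  fun p₁ p₂ => ∃ g : Equiv.Perm (Fin n),
    p₂.1.1 = g * p₁.1.1 * g⁻¹ ∧ p₂.1.2 = g * p₁.1.2 * g⁻¹

open Equiv Monoid Multiplicative

namespace HeckeAux

variable {G : Type*} [Group G] {q n : ℕ}

noncomputable section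

/-- Monoid hom from `Multiplicative (ZMod m)` determined by an element with `g ^ m = 1`. -/
def zmodMulHom (m : ℕ) (g : G) (h : g ^ m = 1) : Multiplicative (ZMod m) →* G :=
  AddMonoidHom.toMultiplicativeLeft
    (ZMod.lift m ⟨zmultiplesHom (Additive G) (Additive.ofMul g), by
      simp only [zmultiplesHom_apply, ← ofMul_zpow, zpow_natCast, h, ofMul_one]⟩)

@[simp] lemma zmodMulHom_ofAdd_one (m : ℕ) (g : G) (h : g ^ m = 1) :
    zmodMulHom m g h (ofAdd (1 : ZMod m)) = g := by
  have h1 : (1 : ZMod m) = ((1 : ℤ) : ZMod m) := by simp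
  simp only [zmodMulHom, AddMonoidHom.coe_toMultiplicativeLeft, Function.comp_apply, toAdd_ofAdd,
    h1, ZMod.lift_coe, zmultiplesHom_apply, one_zsmul, toMul_ofMul]

/-- The Hecke-type free product. -/
abbrev Gam (q : ℕ) : Type := Monoid.Coprod (Multiplicative (ZMod 2)) (Multiplicative (ZMod q))

def ga (q : ℕ) : Gam q := Coprod.inl (ofAdd (1 : ZMod 2))
def gb (q : ℕ) : Gam q := Coprod.inr (ofAdd (1 : ZMod q))

lemma ga_sq (q : ℕ) : (ga q) ^ 2 = 1 := by
  have h : (ga q) ^ 2 = Coprod.inl (ofAdd (1 : ZMod 2) ^ 2) := (map_pow _ _ _).symm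
  rw [h, show (ofAdd (1 : ZMod 2)) ^ 2 = 1 by decide, map_one]

lemma gb_pow (q : ℕ) : (gb q) ^ q = 1 := by
  have h : (gb q) ^ q = Coprod.inr (ofAdd (1 : ZMod q) ^ q) := (map_pow _ _ _).symm
  rw [h]
  have : (ofAdd (1 : ZMod q)) ^ q = 1 := by
    rw [← ofAdd_nsmul, ← ofAdd_zero]
    congr 1
    simp [nsmul_eq_mul]
  rw [this, map_one]

lemma exists_pow_eq (m : ℕ) [NeZero m] (x : Multiplicative (ZMod m)) :
    ∃ k : ℕ, x = (ofAdd (1 : ZMod m)) ^ k := by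
  refine ⟨(toAdd x).val, ?_⟩
  rw [← ofAdd_nsmul]
  have : (toAdd x).val • (1 : ZMod m) = ((toAdd x).val : ZMod m) := by
    simp [nsmul_eq_mul]
  rw [this, ZMod.natCast_rightInverse (toAdd x)]
  rfl

lemma zmod_hom_ext (m : ℕ) [NeZero m] {f g : Multiplicative (ZMod m) →* G}
    (h : f (ofAdd (1 : ZMod m)) = g (ofAdd (1 : ZMod m))) : f = g := by
  refine MonoidHom.ext fun x => ?_
  obtain ⟨k, rfl⟩ := exists_pow_eq m x
  rw [map_pow, map_pow, h]

lemma gam_hom_ext [NeZero q] {f g : Gam q →* G}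
    (h1 : f (ga q) = g (ga q)) (h2 : f (gb q) = g (gb q)) : f = g :=
  Coprod.hom_ext (zmod_hom_ext 2 h1) (zmod_hom_ext q h2)

lemma mem_closure_pair [NeZero q] (φ : Gam q →* G) (γ : Gam q) :
    φ γ ∈ Subgroup.closure {φ (ga q), φ (gb q)} := by
  induction γ using Coprod.induction_on with
  | inl x =>
    obtain ⟨k, rfl⟩ := exists_pow_eq 2 x
    have h : (Coprod.inl (ofAdd (1 : ZMod 2) ^ k) : Gam q) = (ga q) ^ k := map_pow _ _ _
    rw [h, map_pow]
    exact pow_mem (Subgroup.subset_closure (by simp [ga])) k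
  | inr y =>
    obtain ⟨k, rfl⟩ := exists_pow_eq q y
    have h : (Coprod.inr (ofAdd (1 : ZMod q) ^ k) : Gam q) = (gb q) ^ k := map_pow _ _ _
    rw [h, map_pow]
    exact pow_mem (Subgroup.subset_closure (by simp [gb])) k
  | mul x y hx hy =>
    rw [map_mul]
    exact mul_mem hx hy

/-- The hom `Gam q →* Perm (Fin n)` determined by a pair of permutations. -/
def pairHom (σ τ : Perm (Fin n)) (hσ : σ ^ 2 = 1) (hτ : τ ^ q = 1) : Gam q →* Perm (Fin n) :=
  Coprod.lift (zmodMulHom 2 σ hσ) (zmodMulHom q τ hτ)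

@[simp] lemma pairHom_ga (σ τ : Perm (Fin n)) (hσ : σ ^ 2 = 1) (hτ : τ ^ q = 1) :
    pairHom σ τ hσ hτ (ga q) = σ := by
  simp [pairHom, ga]

@[simp] lemma pairHom_gb (σ τ : Perm (Fin n)) (hσ : σ ^ 2 = 1) (hτ : τ ^ q = 1) :
    pairHom σ τ hσ hτ (gb q) = τ := by
  simp [pairHom, gb]

/-- stabilizer of a point pulled back along φ -/
def stabSub (φ : Gam q →* Perm (Fin n)) (x : Fin n) : Subgroup (Gam q) :=
  Subgroup.comap φ (MulAction.stabilizer (Perm (Fin n)) x)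

lemma mem_stabSub {φ : Gam q →* Perm (Fin n)} {x : Fin n} {γ : Gam q} :
    γ ∈ stabSub φ x ↔ φ γ x = x := Iff.rfl

lemma stabSub_smul (φ : Gam q →* Perm (Fin n)) (γ₀ : Gam q) (x : Fin n) :
    stabSub φ (φ γ₀ x) = Subgroup.map (MulAut.conj γ₀).toMonoidHom (stabSub φ x) := by
  ext γ
  simp only [Subgroup.mem_map, MulEquiv.toMonoidHom_eq_coe, MonoidHom.coe_coe,
    MulAut.conj_apply, mem_stabSub]
  constructor
  · intro hγ
    refine ⟨γ₀⁻¹ * γ * γ₀, ?_, by group⟩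
    simp [map_mul, map_inv, Perm.mul_apply, hγ]
  · rintro ⟨h, hh, rfl⟩
    simp [map_mul, map_inv, Perm.mul_apply, hh]

/-- The orbit equivalence for a transitive action via `φ`. -/
def cosetEquiv (φ : Gam q →* Perm (Fin n)) (x₀ : Fin n)
    (htrans : ∀ x y : Fin n, ∃ γ : Gam q, φ γ x = y) :
    (Gam q ⧸ stabSub φ x₀) ≃ Fin n := by
  refine Equiv.ofBijective
    (fun z => Quotient.liftOn' z (fun γ => φ γ x₀) ?_) ⟨?_, ?_⟩
  · intro c d hcd
    rw [QuotientGroup.leftRel_apply] at hcd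
    rw [mem_stabSub, map_mul, map_inv, Perm.mul_apply] at hcd
    have := congrArg (φ c) hcd
    simpa using this.symm
  · intro z w
    induction z using Quotient.inductionOn'
    induction w using Quotient.inductionOn'
    rename_i c d
    intro h
    simp only [Quotient.liftOn'_mk''] at h
    apply Quotient.sound'
    rw [QuotientGroup.leftRel_apply, mem_stabSub, map_mul, map_inv, Perm.mul_apply]
    rw [← h]
    simp
  · intro y
    obtain ⟨γ, hγ⟩ := htrans x₀ y
    exact ⟨QuotientGroup.mk γ, hγ⟩

@[simp] lemma cosetEquiv_mk (φ : Gam q →* Perm (Fin n)) (x₀ : Fin n) (htrans) (γ : Gam q) :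
    cosetEquiv φ x₀ htrans (QuotientGroup.mk γ) = φ γ x₀ := rfl

lemma cosetEquiv_smul (φ : Gam q →* Perm (Fin n)) (x₀ : Fin n) (htrans)
    (γ : Gam q) (z : Gam q ⧸ stabSub φ x₀) :
    cosetEquiv φ x₀ htrans (γ • z) = φ γ (cosetEquiv φ x₀ htrans z) := by
  induction z using Quotient.inductionOn'
  rename_i c
  rw [show (Quotient.mk'' c : Gam q ⧸ stabSub φ x₀) = QuotientGroup.mk c from rfl,
    MulAction.Quotient.smul_mk, cosetEquiv_mk, cosetEquiv_mk]
  rw [show γ • c = γ * c from rfl, map_mul, Perm.mul_apply]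

/-- conjugation of permutations along an equivalence, as a hom -/
def permCongrHom {α β : Type*} (e : α ≃ β) : Perm α →* Perm β where
  toFun p := (e.symm.trans p).trans e
  map_one' := by ext x; simp
  map_mul' p₂ p₁ := by ext x; simp

@[simp] lemma permCongrHom_apply {α β : Type*} (e : α ≃ β) (p : Perm α) (x : β) :
    permCongrHom e p x = e (p (e.symm x)) := rfl

/-- The action hom of `Gam q` on `Fin n` obtained from a subgroup and a coset labelling. -/
def subHom (H : Subgroup (Gam q)) (e : (Gam q ⧸ H) ≃ Fin n) : Gam q →* Perm (Fin n) :=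
  (permCongrHom e).comp (MulAction.toPermHom (Gam q) (Gam q ⧸ H))

@[simp] lemma subHom_apply (H : Subgroup (Gam q)) (e : (Gam q ⧸ H) ≃ Fin n) (γ : Gam q)
    (x : Fin n) : subHom H e γ x = e (γ • e.symm x) := rfl

lemma boidProp [NeZero q] (H : Subgroup (Gam q)) (e : (Gam q ⧸ H) ≃ Fin n) :
    (subHom H e (ga q)) ^ 2 = 1 ∧ (subHom H e (gb q)) ^ q = 1 ∧
    ∀ x y : Fin n, ∃ g ∈ Subgroup.closure {subHom H e (ga q), subHom H e (gb q)}, g x = y := by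
  refine ⟨by rw [← map_pow, ga_sq, map_one], by rw [← map_pow, gb_pow, map_one], ?_⟩
  intro x y
  obtain ⟨c, hc⟩ := QuotientGroup.mk_surjective (e.symm x)
  obtain ⟨d, hd⟩ := QuotientGroup.mk_surjective (e.symm y)
  refine ⟨subHom H e (d * c⁻¹), mem_closure_pair _ _, ?_⟩
  rw [subHom_apply, ← hc, MulAction.Quotient.smul_mk,
    show (d * c⁻¹) • c = d by simp [smul_eq_mul], hd]
  simp

/-- canonical labelling of the cosets -/
def labelEquiv (H : Subgroup (Gam q)) (hidx : H.index = n) (hn : 0 < n) :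
    (Gam q ⧸ H) ≃ Fin n :=
  (Nat.equivFinOfCardPos (by
    have : Nat.card (Gam q ⧸ H) = n := hidx
    omega)).trans (finCongr hidx)

/-- forward: from a subgroup of index `n` to a boid pair. -/
def fwdPair [NeZero q] (H : Subgroup (Gam q)) (hidx : H.index = n) (hn : 0 < n) :
    BoidPair q n :=
  ⟨(subHom H (labelEquiv H hidx hn) (ga q), subHom H (labelEquiv H hidx hn) (gb q)),
    boidProp H (labelEquiv H hidx hn)⟩

/-- transitivity in terms of `pairHom`. -/
lemma pairHom_trans [NeZero q] (p : BoidPair q n) :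
    ∀ x y : Fin n, ∃ γ : Gam q, pairHom p.1.1 p.1.2 p.2.1 p.2.2.1 γ x = y := by
  intro x y
  obtain ⟨g, hg, hgx⟩ := p.2.2.2 x y
  set φ := pairHom p.1.1 p.1.2 p.2.1 p.2.2.1
  have hle : Subgroup.closure {p.1.1, p.1.2} ≤ φ.range := by
    rw [Subgroup.closure_le]
    rintro z (rfl | rfl)
    · exact ⟨ga q, by simp [φ]⟩
    · exact ⟨gb q, by simp [φ]⟩
  obtain ⟨γ, hγ⟩ := hle hg
  exact ⟨γ, by rw [hγ]; exact hgx⟩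

lemma bwd_index [NeZero q] (hn : 0 < n) (p : BoidPair q n) :
    (stabSub (pairHom p.1.1 p.1.2 p.2.1 p.2.2.1) ⟨0, hn⟩).index = n := by
  have := Nat.card_congr (cosetEquiv _ ⟨0, hn⟩ (pairHom_trans p))
  simpa [Subgroup.index] using this

/-- backward: from a boid pair to a subgroup of index n. -/
def bwdSub [NeZero q] (hn : 0 < n) (p : BoidPair q n) :
    {H : Subgroup (Gam q) // H.index = n} :=
  ⟨stabSub (pairHom p.1.1 p.1.2 p.2.1 p.2.2.1) ⟨0, hn⟩, bwd_index hn p⟩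

/-- Conjugating permutation actions along equivariant equivalences of coset spaces. -/
lemma subHom_conj {H₁ H₂ : Subgroup (Gam q)} (e₁ : (Gam q ⧸ H₁) ≃ Fin n)
    (e₂ : (Gam q ⧸ H₂) ≃ Fin n) (δ : (Gam q ⧸ H₁) ≃ (Gam q ⧸ H₂))
    (hδ : ∀ (γ : Gam q) z, δ (γ • z) = γ • δ z) (γ : Gam q) :
    subHom H₂ e₂ γ =
      ((e₁.symm.trans δ).trans e₂) * subHom H₁ e₁ γ * ((e₁.symm.trans δ).trans e₂)⁻¹ := by
  ext x
  simp only [Perm.mul_apply, subHom_apply, Perm.inv_def, Equiv.symm_trans_apply,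
    Equiv.trans_apply, Equiv.symm_symm, Equiv.symm_apply_apply, Equiv.apply_symm_apply]
  rw [hδ]
  simp

/-- Right translation as an equivalence of coset spaces of conjugate subgroups. -/
def conjQuotEquiv (H : Subgroup (Gam q)) (g : Gam q) :
    (Gam q ⧸ H) ≃ (Gam q ⧸ Subgroup.map (MulAut.conj g).toMonoidHom H) where
  toFun := Quotient.map' (fun x => x * g⁻¹) (by
    intro x y hxy
    rw [QuotientGroup.leftRel_apply] at hxy ⊢
    refine ⟨x⁻¹ * y, hxy, ?_⟩
    simp only [MulEquiv.toMonoidHom_eq_coe, MonoidHom.coe_coe, MulAut.conj_apply]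
    group)
  invFun := Quotient.map' (fun x => x * g) (by
    intro x y hxy
    rw [QuotientGroup.leftRel_apply] at hxy ⊢
    obtain ⟨h, hh, hc⟩ := hxy
    simp only [MulEquiv.toMonoidHom_eq_coe, MonoidHom.coe_coe, MulAut.conj_apply] at hc
    have : x⁻¹ * y = g * h * g⁻¹ := hc.symm
    rw [show (x * g)⁻¹ * (y * g) = g⁻¹ * (x⁻¹ * y) * g by group, this,
      show g⁻¹ * (g * h * g⁻¹) * g = h by group]
    exact hh)
  left_inv := by
    intro z
    induction z using Quotient.inductionOn'
    exact congrArg Quotient.mk'' (by group)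
  right_inv := by
    intro z
    induction z using Quotient.inductionOn'
    exact congrArg Quotient.mk'' (by group)

@[simp] lemma conjQuotEquiv_mk (H : Subgroup (Gam q)) (g x : Gam q) :
    conjQuotEquiv H g (QuotientGroup.mk x) = QuotientGroup.mk (x * g⁻¹) := rfl

lemma conjQuotEquiv_smul (H : Subgroup (Gam q)) (g : Gam q) (γ : Gam q) (z : Gam q ⧸ H) :
    conjQuotEquiv H g (γ • z) = γ • conjQuotEquiv H g z := by
  induction z using Quotient.inductionOn'
  rename_i c
  rw [show (Quotient.mk'' c : Gam q ⧸ H) = QuotientGroup.mk c from rfl,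
    MulAction.Quotient.smul_mk, conjQuotEquiv_mk, conjQuotEquiv_mk,
    MulAction.Quotient.smul_mk]
  congr 1
  show γ * c * g⁻¹ = γ * (c * g⁻¹)
  group

/-- forward map is well defined on conjugacy classes -/
lemma fwd_wd [NeZero q] (hn : 0 < n) (H₁ H₂ : {H : Subgroup (Gam q) // H.index = n})
    (h : conjRel (Gam q) n H₁ H₂) :
    boidRel q n (fwdPair H₁.1 H₁.2 hn) (fwdPair H₂.1 H₂.2 hn) := by
  obtain ⟨H₁, hidx₁⟩ := H₁
  obtain ⟨H₂, hidx₂⟩ := H₂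
  obtain ⟨g, hg⟩ := h
  simp only at hg
  subst hg
  exact ⟨(((labelEquiv H₁ hidx₁ hn).symm.trans (conjQuotEquiv H₁ g)).trans
      (labelEquiv _ hidx₂ hn)),
    subHom_conj _ _ _ (conjQuotEquiv_smul H₁ g) (ga q),
    subHom_conj _ _ _ (conjQuotEquiv_smul H₁ g) (gb q)⟩

/-- backward map is well defined on simultaneous-conjugacy classes -/
lemma bwd_wd [NeZero q] (hn : 0 < n) (p₁ p₂ : BoidPair q n) (h : boidRel q n p₁ p₂) :
    conjRel (Gam q) n (bwdSub hn p₁) (bwdSub hn p₂) := by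
  obtain ⟨g, hg1, hg2⟩ := h
  set φ₁ := pairHom p₁.1.1 p₁.1.2 p₁.2.1 p₁.2.2.1 with hφ₁
  set φ₂ := pairHom p₂.1.1 p₂.1.2 p₂.2.1 p₂.2.2.1 with hφ₂
  have hcomp : φ₂ = ((MulAut.conj g).toMonoidHom.comp φ₁ : Gam q →* Perm (Fin n)) := by
    apply gam_hom_ext
    · simp [hφ₁, hφ₂, hg1]
    · simp [hφ₁, hφ₂, hg2]
  obtain ⟨γ₀, hγ₀⟩ := pairHom_trans p₁ ⟨0, hn⟩ (g⁻¹ ⟨0, hn⟩)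
  refine ⟨γ₀, ?_⟩
  show stabSub φ₂ ⟨0, hn⟩ = Subgroup.map (MulAut.conj γ₀).toMonoidHom (stabSub φ₁ ⟨0, hn⟩)
  rw [← stabSub_smul, hγ₀]
  ext γ
  rw [mem_stabSub, mem_stabSub, hcomp]
  simp only [MonoidHom.comp_apply, MulEquiv.toMonoidHom_eq_coe, MonoidHom.coe_coe,
    MulAut.conj_apply, Perm.mul_apply]
  constructor
  · intro hx
    have := congrArg (g⁻¹ : Perm (Fin n)) hx
    simpa using this
  · intro hx
    rw [show (g⁻¹ : Perm (Fin n)) ⟨0, hn⟩ = g⁻¹ ⟨0, hn⟩ from rfl] at hx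
    rw [hx]
    simp

/-- first roundtrip: backward of forward is conjugate to the original subgroup. -/
lemma round1 [NeZero q] (hn : 0 < n) (H : {H : Subgroup (Gam q) // H.index = n}) :
    conjRel (Gam q) n H (bwdSub hn (fwdPair H.1 H.2 hn)) := by
  obtain ⟨H, hidx⟩ := H
  set e := labelEquiv H hidx hn with he
  have hφ : pairHom (fwdPair H hidx hn).1.1 (fwdPair H hidx hn).1.2
      (fwdPair H hidx hn).2.1 (fwdPair H hidx hn).2.2.1 = subHom H e := by
    apply gam_hom_ext
    · rw [pairHom_ga]; rfl
    · rw [pairHom_gb]; rfl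
  obtain ⟨c, hc⟩ := QuotientGroup.mk_surjective (e.symm ⟨0, hn⟩)
  refine ⟨c, ?_⟩
  show stabSub _ ⟨0, hn⟩ = _
  rw [hφ]
  ext γ
  rw [mem_stabSub, subHom_apply, Equiv.apply_eq_iff_eq_symm_apply, ← hc,
    MulAction.Quotient.smul_mk, show γ • c = γ * c from rfl, QuotientGroup.eq]
  simp only [Subgroup.mem_map, MulEquiv.toMonoidHom_eq_coe, MonoidHom.coe_coe,
    MulAut.conj_apply]
  constructor
  · intro hmem
    have h2 : c⁻¹ * γ * c ∈ H := by
      have := inv_mem hmem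
      rwa [show ((γ * c)⁻¹ * c)⁻¹ = c⁻¹ * γ * c by group] at this
    exact ⟨c⁻¹ * γ * c, h2, by group⟩
  · rintro ⟨h, hh, rfl⟩
    rw [show (c * h * c⁻¹ * c)⁻¹ * c = h⁻¹ by group]
    exact inv_mem hh

/-- second roundtrip: forward of backward is simultaneously conjugate to the original pair. -/
lemma round2 [NeZero q] (hn : 0 < n) (p : BoidPair q n) :
    boidRel q n (fwdPair (bwdSub hn p).1 (bwdSub hn p).2 hn) p := by
  set φ := pairHom p.1.1 p.1.2 p.2.1 p.2.2.1 with hφ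
  set ψ := cosetEquiv φ ⟨0, hn⟩ (pairHom_trans p) with hψ
  set e := labelEquiv (bwdSub hn p).1 (bwdSub hn p).2 hn with he
  refine ⟨(e.symm.trans ψ : Perm (Fin n)), Equiv.ext fun x => ?_, Equiv.ext fun x => ?_⟩
  · show p.1.1 x = ((e.symm.trans ψ : Perm (Fin n)) * subHom (bwdSub hn p).1 e (ga q) *
      (e.symm.trans ψ : Perm (Fin n))⁻¹) x
    simp only [Perm.mul_apply, Perm.inv_def, Equiv.symm_trans_apply, Equiv.trans_apply,
      Equiv.symm_symm, subHom_apply, Equiv.symm_apply_apply]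
    show p.1.1 x = ψ (e.symm (e ((ga q) • e.symm (e (ψ.symm x)))))
    rw [Equiv.symm_apply_apply, show e.symm (e (ψ.symm x)) = ψ.symm x from e.symm_apply_apply _]
    show p.1.1 x = ψ ((ga q) • ψ.symm x)
    rw [hψ, cosetEquiv_smul φ ⟨0, hn⟩ (pairHom_trans p) (ga q), Equiv.apply_symm_apply]
    simp only [hφ, pairHom_ga]
  · show p.1.2 x = ((e.symm.trans ψ : Perm (Fin n)) * subHom (bwdSub hn p).1 e (gb q) *
      (e.symm.trans ψ : Perm (Fin n))⁻¹) x
    simp only [Perm.mul_apply, Perm.inv_def, Equiv.symm_trans_apply, Equiv.trans_apply,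
      Equiv.symm_symm, subHom_apply, Equiv.symm_apply_apply]
    show p.1.2 x = ψ (e.symm (e ((gb q) • e.symm (e (ψ.symm x)))))
    rw [Equiv.symm_apply_apply, show e.symm (e (ψ.symm x)) = ψ.symm x from e.symm_apply_apply _]
    show p.1.2 x = ψ ((gb q) • ψ.symm x)
    rw [hψ, cosetEquiv_smul φ ⟨0, hn⟩ (pairHom_trans p) (gb q), Equiv.apply_symm_apply]
    simp only [hφ, pairHom_gb]

end

end HeckeAux

/-- Permutation form of the classification of finite-index subgroups of the Hecke group
`H_q ≅ (ℤ/2ℤ) ∗ (ℤ/qℤ)`: for `q ≥ 3` and `n ≥ 1`, conjugacy classes of index-`n` subgroups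
of `(ℤ/2ℤ) ∗ (ℤ/qℤ)` are in bijection with orbits, under simultaneous conjugation by
`Sym(Fin n)`, of pairs `(σ, τ)` of permutations of `Fin n` with `σ² = 1`, `τ^q = 1` and
`⟨σ, τ⟩` transitive on `Fin n`. -/
theorem hecke_subgroups_equiv_boid_pairs (q n : ℕ) (hq : 3 ≤ q) (hn : 0 < n) :
    Nonempty
      (Quot (conjRel (Monoid.Coprod (Multiplicative (ZMod 2)) (Multiplicative (ZMod q))) n) ≃
       Quot (boidRel q n)) := by
  haveI : NeZero q := ⟨by omega⟩
  refine ⟨Equiv.mk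
    (Quot.lift (fun H => Quot.mk _ (HeckeAux.fwdPair H.1 H.2 hn))
      (fun H₁ H₂ h => Quot.sound (HeckeAux.fwd_wd hn H₁ H₂ h)))
    (Quot.lift (fun p => Quot.mk _ (HeckeAux.bwdSub hn p))
      (fun p₁ p₂ h => Quot.sound (HeckeAux.bwd_wd hn p₁ p₂ h)))
    ?_ ?_⟩
  · intro z
    induction z using Quot.ind
    rename_i H
    exact (Quot.sound (HeckeAux.round1 hn H)).symm
  · intro z
    induction z using Quot.ind
    rename_i p
    exact Quot.sound (HeckeAux.round2 hn p)
end
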